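/- arXiv:2111.00062 — 5 statements merged into one kernel-verified Lean document; each statement's English description precedes it below -/
import Mathlib

section
/- The hypergeometric tail Hyp(k,m,K,M) is non-decreasing in M: for all integers k, m, K, M with 0 ≤ m ≤ M and 0 ≤ K ≤ M, Hyp(k,m,K,M+1) ≥ Hyp(k,m,K,M). -/
open Finset

/-- Real-cast version of `Nat.choose_succ_right_eq`, valid for all `N, n`. -/
lemma ch_real (N n : ℕ) : ((n : ℝ) + 1) * (N.choose (n + 1) : ℝ) = (N.choose n : ℝ) * ((N : ℝ) - n) := by
  have h := Nat.choose_succ_right_eq N n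
  rcases le_or_gt (n + 1) N with hle | hlt
  · have : ((N.choose (n+1) * (n+1) : ℕ) : ℝ) = ((N.choose n * (N - n) : ℕ) : ℝ) := by
      exact_mod_cast congrArg (Nat.cast : ℕ → ℝ) h
    push_cast [Nat.cast_sub (by omega : n ≤ N)] at this
    linarith
  · rcases Nat.lt_or_ge N n with h1 | h1
    · simp [Nat.choose_eq_zero_of_lt (by omega : N < n + 1), Nat.choose_eq_zero_of_lt h1]
    · have hN : N = n := by omega
      subst hN
      simp [Nat.choose_eq_zero_of_lt (by omega : N < N + 1)]

noncomputable def Sr (K N m k : ℕ) : ℝ :=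
  ∑ j ∈ Finset.range (k + 1), (K.choose j : ℝ) * (N.choose (m - j) : ℝ)

lemma key (K N : ℕ) : ∀ k m : ℕ, k + 1 ≤ m →
    ((K : ℝ) + N - m + 1) * Sr K N (m - 1) k - m * Sr K N m k
      = ((K : ℝ) - k) * (K.choose k : ℝ) * (N.choose (m - 1 - k) : ℝ) := by
  intro k
  induction k with
  | zero =>
    intro m hm
    simp only [Sr, zero_add, Finset.sum_range_one, Nat.choose_zero_right, Nat.cast_one, one_mul,
      Nat.sub_zero, Nat.cast_zero, sub_zero]
    have h := ch_real N (m - 1)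
    have h1 : (m - 1) + 1 = m := by omega
    have h2 : ((m - 1 : ℕ) : ℝ) = (m : ℝ) - 1 := by
      have : (1 : ℕ) ≤ m := by omega
      push_cast [Nat.cast_sub this]; ring
    rw [h1, h2] at h
    nlinarith [h]
  | succ k ih =>
    intro m hm
    have hk : k + 1 ≤ m := by omega
    have hIH := ih m hk
    simp only [Sr, Finset.sum_range_succ] at hIH ⊢
    -- abbreviations
    set a : ℝ := (K.choose k : ℝ) with ha
    set b : ℝ := (K.choose (k + 1) : ℝ) with hb
    set c : ℝ := (N.choose (m - 1 - (k + 1)) : ℝ) with hc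
    set d : ℝ := (N.choose (m - (k + 1)) : ℝ) with hd
    have e1 : (N.choose (m - 1 - k) : ℝ) = d := by
      rw [hd]
      have : m - 1 - k = m - (k + 1) := by omega
      rw [this]
    have h1 : ((k : ℝ) + 1) * b = a * ((K : ℝ) - k) := ch_real K k
    have h2 : ((m : ℝ) - (k : ℝ) - 1) * d = c * ((N : ℝ) - ((m : ℝ) - (k : ℝ) - 2)) := by
      have h := ch_real N (m - 1 - (k + 1))
      have h3 : (m - 1 - (k + 1)) + 1 = m - (k + 1) := by omega
      have h4 : ((m - 1 - (k + 1) : ℕ) : ℝ) = (m : ℝ) - (k : ℝ) - 2 := by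
        have : k + 2 ≤ m := by omega
        push_cast [Nat.cast_sub (by omega : 1 ≤ m), Nat.cast_sub (by omega : k + 1 ≤ m - 1)]
        ring
      rw [h3, h4, ← hc, ← hd] at h
      linarith [h]
    rw [e1] at hIH ⊢
    push_cast
    nlinarith [hIH, h1, h2, mul_self_nonneg (b*c)]

/-- The hypergeometric tail `Hyp(k,m,K,M) = ∑_{j=0}^{k} C(K,j)·C(M−K,m−j)/C(M,m)`, with the
convention `C(N,n) = 0` for `n < 0` (encoded by the `if j ≤ m` guard for `m − j`). -/
noncomputable def Hyp (k m K M : ℕ) : ℝ :=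
  (∑ j ∈ Finset.range (k + 1),
      if j ≤ m then ((K.choose j : ℝ) * ((M - K).choose (m - j) : ℝ)) else 0) / (M.choose m)

lemma Sr_nonneg (K N m k : ℕ) : 0 ≤ Sr K N m k := by
  apply Finset.sum_nonneg
  intro j _
  positivity

lemma key_le (K N m k : ℕ) (hk : k + 1 ≤ m) :
    (m : ℝ) * Sr K N m k ≤ ((K : ℝ) + N - m + 1) * Sr K N (m - 1) k := by
  have h := key K N k m hk
  have hpos : 0 ≤ ((K : ℝ) - k) * (K.choose k : ℝ) * (N.choose (m - 1 - k) : ℝ) := by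
    rcases le_or_gt k K with h1 | h1
    · have : (0:ℝ) ≤ (K : ℝ) - k := by
        have : (k:ℝ) ≤ K := by exact_mod_cast h1
        linarith
      positivity
    · simp [Nat.choose_eq_zero_of_lt h1]
  linarith

lemma vand (K N m : ℕ) :
    ∑ j ∈ Finset.range (m + 1), (K.choose j : ℝ) * (N.choose (m - j) : ℝ)
      = ((K + N).choose m : ℝ) := by
  rw [Nat.add_choose_eq, Finset.Nat.sum_antidiagonal_eq_sum_range_succ_mk]
  push_cast
  rfl

lemma hyp_eq_one (k m K M : ℕ) (hmk : m ≤ k) (hm : m ≤ M) (hK : K ≤ M) :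
    Hyp k m K M = 1 := by
  have hsum : (∑ j ∈ Finset.range (k + 1),
      if j ≤ m then ((K.choose j : ℝ) * ((M - K).choose (m - j) : ℝ)) else 0)
      = ∑ j ∈ Finset.range (m + 1), (K.choose j : ℝ) * ((M - K).choose (m - j) : ℝ) := by
    rw [← Finset.sum_filter]
    apply Finset.sum_congr
    · ext j; simp; omega
    · intros; rfl
  rw [Hyp, hsum, vand]
  have hKN : K + (M - K) = M := by omega
  rw [hKN]
  have : (0:ℝ) < (M.choose m : ℝ) := by exact_mod_cast Nat.choose_pos hm
  field_simp

lemma hyp_eq_Sr (k m K M : ℕ) (h : k ≤ m) :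
    Hyp k m K M = Sr K (M - K) m k / (M.choose m : ℝ) := by
  rw [Hyp, Sr]
  congr 1
  apply Finset.sum_congr rfl
  intro j hj
  rw [if_pos]
  simp only [Finset.mem_range] at hj
  omega

/-- The hypergeometric tail is non-decreasing in the population size `M`:
`Hyp(k,m,K,M+1) ≥ Hyp(k,m,K,M)` for `0 ≤ m ≤ M` and `0 ≤ K ≤ M`. -/
theorem hyp_tail_mono_population (k m K M : ℕ) (hm : m ≤ M) (hK : K ≤ M) :
    Hyp k m K M ≤ Hyp k m K (M + 1) := by
  rcases le_or_gt m k with hmk | hkm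
  · rw [hyp_eq_one k m K M hmk hm hK, hyp_eq_one k m K (M+1) hmk (by omega) (by omega)]
  · have hk1 : k + 1 ≤ m := hkm
    rw [hyp_eq_Sr k m K M (by omega), hyp_eq_Sr k m K (M+1) (by omega)]
    set N := M - K with hN
    have hKN : K + N = M := by omega
    have hMK1 : M + 1 - K = N + 1 := by omega
    rw [hMK1]
    have hm1 : (m - 1) + 1 = m := by omega
    have hsplit : Sr K (N+1) m k = Sr K N (m-1) k + Sr K N m k := by
      rw [Sr, Sr, Sr, ← Finset.sum_add_distrib]
      apply Finset.sum_congr rfl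
      intro j hj
      simp only [Finset.mem_range] at hj
      have hj1 : m - j = (m - 1 - j) + 1 := by omega
      rw [hj1, Nat.choose_succ_succ]
      have h2 : m - 1 - j + 1 = m - j := by omega
      rw [Nat.succ_eq_add_one, h2]
      push_cast; ring
    have hch : ((M+1).choose m : ℝ) = (M.choose (m-1) : ℝ) + (M.choose m : ℝ) := by
      have h := Nat.choose_succ_succ M (m-1)
      simp only [Nat.succ_eq_add_one] at h
      rw [hm1] at h
      exact_mod_cast h
    have hpos1 : (0:ℝ) < (M.choose m : ℝ) := by exact_mod_cast Nat.choose_pos hm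
    have hpos2 : (0:ℝ) < ((M+1).choose m : ℝ) := by exact_mod_cast Nat.choose_pos (by omega : m ≤ M + 1)
    rw [div_le_div_iff₀ hpos1 hpos2, hsplit, hch]
    have hkey := key_le K N m k hk1
    have hcast : (K:ℝ) + N - m + 1 = (M:ℝ) - m + 1 := by
      have h : ((K + N : ℕ) : ℝ) = (M:ℝ) := by rw [hKN]
      push_cast at h; linarith
    rw [hcast] at hkey
    have hid : (m:ℝ) * (M.choose m : ℝ) = (M.choose (m-1) : ℝ) * ((M:ℝ) - m + 1) := by
      have h := ch_real M (m-1)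
      rw [hm1] at h
      have h2 : ((m-1:ℕ):ℝ) = (m:ℝ) - 1 := by push_cast [Nat.cast_sub (by omega : 1 ≤ m)]; ring
      rw [h2] at h
      linarith [h]
    have hS1 := Sr_nonneg K N (m-1) k
    have hS2 := Sr_nonneg K N m k
    have hC1 : (0:ℝ) ≤ (M.choose (m-1) : ℝ) := by positivity
    have hcore : Sr K N m k * (M.choose (m-1):ℝ) ≤ Sr K N (m-1) k * (M.choose m :ℝ) := by
      have hmpos : (0:ℝ) < m := by exact_mod_cast (by omega : 0 < m)
      rw [← mul_le_mul_iff_right₀ hmpos]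
      calc (m:ℝ) * (Sr K N m k * (M.choose (m-1):ℝ))
          = ((m:ℝ) * Sr K N m k) * (M.choose (m-1):ℝ) := by ring
        _ ≤ (((M:ℝ) - m + 1) * Sr K N (m-1) k) * (M.choose (m-1):ℝ) :=
            mul_le_mul_of_nonneg_right hkey hC1
        _ = Sr K N (m-1) k * ((M.choose (m-1):ℝ) * ((M:ℝ) - m + 1)) := by ring
        _ = (m:ℝ) * (Sr K N (m-1) k * (M.choose m:ℝ)) := by rw [← hid]; ring
    nlinarith [hcore, hS2, hpos1]
end

section
/- For integers k, m, K, M satisfying 0 ≤ k < min(m,K) and m−k ≤ M−K, the hypergeometric tail is strictly decreasing in K: Hyp(k,m,K,M) > Hyp(k,m,K+1,M). -/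
/-- Berkopec-type identity over ℕ. -/
lemma hyp_aux (m K M : ℕ) (hKM : K + 1 ≤ M) :
    ∀ k, k + 1 ≤ m →
      (∑ j ∈ Finset.range (k + 1), K.choose j * (M - K).choose (m - j))
        = (∑ j ∈ Finset.range (k + 1), (K + 1).choose j * (M - K - 1).choose (m - j))
          + K.choose k * (M - K - 1).choose (m - 1 - k) := by
  intro k
  induction k with
  | zero =>
    intro hm
    simp only [zero_add, Finset.sum_range_one, Nat.choose_zero_right, one_mul, Nat.sub_zero]
    obtain ⟨a, rfl⟩ : ∃ a, m = a + 1 := ⟨m - 1, by omega⟩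
    obtain ⟨b, rfl⟩ : ∃ b, M = K + 1 + b := ⟨M - K - 1, by omega⟩
    have h1 : K + 1 + b - K = b + 1 := by omega
    have h2 : b + 1 - 1 = b := by omega
    have h3 : a + 1 - 1 = a := by omega
    rw [h1, h2, h3, Nat.choose_succ_succ]
    ring
  | succ k ih =>
    intro hm
    have hm' : k + 1 ≤ m := by omega
    rw [Finset.sum_range_succ (f := fun j => K.choose j * (M - K).choose (m - j)),
        Finset.sum_range_succ (f := fun j => (K + 1).choose j * (M - K - 1).choose (m - j)),
        ih hm']
    -- reduce to the pointwise step identity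
    obtain ⟨a, rfl⟩ : ∃ a, m = k + 2 + a := ⟨m - k - 2, by omega⟩
    obtain ⟨b, rfl⟩ : ∃ b, M = K + 1 + b := ⟨M - K - 1, by omega⟩
    have h1 : K + 1 + b - K = b + 1 := by omega
    have h2 : b + 1 - 1 = b := by omega
    have h3 : k + 2 + a - 1 - k = a + 1 := by omega
    have h4 : k + 2 + a - (k + 1) = a + 1 := by omega
    have h5 : k + 2 + a - 1 - (k + 1) = a := by omega
    rw [h1, h2, h3, h4, h5]
    rw [show (b + 1).choose (a + 1) = b.choose a + b.choose (a + 1) from Nat.choose_succ_succ _ _,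
        show (K + 1).choose (k + 1) = K.choose k + K.choose (k + 1) from Nat.choose_succ_succ _ _]
    ring

/-- For `0 ≤ k < min(m,K)` and `m − k ≤ M − K`, the hypergeometric tail is strictly
decreasing in `K`: `Hyp(k,m,K,M) > Hyp(k,m,K+1,M)`. -/
theorem hyp_tail_strictAnti_K (k m K M : ℕ) (hk : k < min m K) (h : m - k ≤ M - K) :
    Hyp k m (K + 1) M < Hyp k m K M := by
  have hkm : k + 1 ≤ m := by omega
  have hkK : k + 1 ≤ K := by omega
  have hKM : K + 1 ≤ M := by omega
  have hmM : m ≤ M := by omega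
  have hD : (0 : ℝ) < (M.choose m : ℝ) := by
    exact_mod_cast Nat.choose_pos hmM
  unfold Hyp
  have hguard : ∀ (A : ℕ),
      (∑ j ∈ Finset.range (k + 1),
        if j ≤ m then ((A.choose j : ℝ) * ((M - A).choose (m - j) : ℝ)) else 0)
      = (∑ j ∈ Finset.range (k + 1), ((A.choose j : ℝ) * ((M - A).choose (m - j) : ℝ))) := by
    intro A
    apply Finset.sum_congr rfl
    intro j hj
    rw [if_pos]
    have := Finset.mem_range.mp hj
    omega
  rw [hguard, hguard]
  have hMK1 : M - (K + 1) = M - K - 1 := by omega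
  rw [hMK1]
  have key := hyp_aux m K M hKM k hkm
  have keyR : (∑ j ∈ Finset.range (k + 1), ((K.choose j : ℝ) * ((M - K).choose (m - j) : ℝ)))
      = (∑ j ∈ Finset.range (k + 1),
          (((K + 1).choose j : ℝ) * ((M - K - 1).choose (m - j) : ℝ)))
        + (K.choose k : ℝ) * ((M - K - 1).choose (m - 1 - k) : ℝ) := by
    exact_mod_cast congrArg (Nat.cast : ℕ → ℝ) key
  have hpos : (0 : ℝ) < (K.choose k : ℝ) * ((M - K - 1).choose (m - 1 - k) : ℝ) := by
    have h1 : 0 < K.choose k := Nat.choose_pos (by omega)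
    have h2 : 0 < (M - K - 1).choose (m - 1 - k) := Nat.choose_pos (by omega)
    positivity
  rw [keyR]
  gcongr
  linarith
end

section
/- Define HypInv(k,m,δ,M) = min{K : Hyp(k,m,K,M) ≤ δ} for 0 ≤ k < m ≤ M and δ ∈ (0,1), restricted to k < K ≤ M−m+k+1. For fixed m, δ, M in the regime where the hypergeometric tail is strictly decreasing in K (i.e., 0 ≤ k < min(m,K) and m−k ≤ M−K on the relevant range), the pseudo-inverse is strictly increasing in k: HypInv(k,m,δ,M) < HypInv(k+1,m,δ,M) whenever k+1 < m. -/
open Finset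

/-- The hypergeometric tail pseudo-inverse `HypInv(k,m,δ,M) = min{K : Hyp(k,m,K,M) ≤ δ}`. -/
noncomputable def HypInv (k m : ℕ) (δ : ℝ) (M : ℕ) : ℕ :=
  sInf {K : ℕ | Hyp k m K M ≤ δ}

lemma hyp_key_nat (K N m k : ℕ) (h : k < m) :
    ∑ j ∈ range (k+1), K.choose j * (N+1).choose (m - j)
      + K.choose (k+1) * N.choose (m - (k+1))
    = ∑ j ∈ range (k+2), (K+1).choose j * N.choose (m - j) := by
  have hL : ∑ j ∈ range (k+1), K.choose j * (N+1).choose (m - j)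
      = ∑ j ∈ range (k+1), K.choose j * N.choose (m - j)
        + ∑ j ∈ range (k+1), K.choose j * N.choose (m - j - 1) := by
    rw [← Finset.sum_add_distrib]
    refine Finset.sum_congr rfl fun j hj => ?_
    rw [Finset.mem_range] at hj
    have hjm : j < m := lt_of_le_of_lt (Nat.lt_succ_iff.mp hj) h
    have hmj : m - j = (m - j - 1) + 1 := by omega
    rw [hmj, Nat.choose_succ_succ, Nat.succ_eq_add_one]
    have h2 : m - j - 1 + 1 = m - j := by omega
    rw [h2, mul_add]
    ring
  have hR : ∑ j ∈ range (k+2), (K+1).choose j * N.choose (m - j)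
      = ∑ j ∈ range (k+2), K.choose j * N.choose (m - j)
        + ∑ j ∈ range (k+1), K.choose j * N.choose (m - j - 1) := by
    rw [Finset.sum_range_succ' (fun j => (K+1).choose j * N.choose (m - j)) (k+1),
      Finset.sum_range_succ' (fun j => K.choose j * N.choose (m - j)) (k+1)]
    simp only [Nat.choose_succ_succ, add_mul, Nat.choose_zero_right]
    rw [Finset.sum_add_distrib]
    have : ∀ j, m - (j + 1) = m - j - 1 := fun j => by omega
    simp only [this]
    ring
  rw [hL, hR, Finset.sum_range_succ (fun j => K.choose j * N.choose (m - j)) (k+1)]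
  ring

lemma choose_pos_real {m M : ℕ} (hm : m ≤ M) : (0:ℝ) < (M.choose m : ℝ) := by
  exact_mod_cast Nat.choose_pos hm

lemma hyp_le (k m K M : ℕ) (hk : k + 1 < m) (hm : m ≤ M) (hK : K + 1 ≤ M) :
    Hyp k m K M ≤ Hyp (k+1) m (K+1) M := by
  unfold Hyp
  have hMm := choose_pos_real hm
  have hN : M - K = (M - (K+1)) + 1 := by omega
  have hg1 : (∑ j ∈ range (k+1),
        if j ≤ m then ((K.choose j : ℝ) * (((M - K).choose (m - j)) : ℝ)) else 0)
      = ((∑ j ∈ range (k+1), K.choose j * (M - K).choose (m - j) : ℕ) : ℝ) := by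
    push_cast
    refine Finset.sum_congr rfl fun j hj => ?_
    rw [Finset.mem_range] at hj
    rw [if_pos (by omega)]
  have hg2 : (∑ j ∈ range (k+1+1),
        if j ≤ m then (((K+1).choose j : ℝ) * (((M - (K+1)).choose (m - j)) : ℝ)) else 0)
      = ((∑ j ∈ range (k+2), (K+1).choose j * (M - (K+1)).choose (m - j) : ℕ) : ℝ) := by
    push_cast
    refine Finset.sum_congr rfl fun j hj => ?_
    rw [Finset.mem_range] at hj
    rw [if_pos (by omega)]
  rw [hg1, hg2]
  gcongr
  have := hyp_key_nat K (M - (K+1)) m k (by omega)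
  rw [← hN] at this
  omega

lemma hyp_one (k m K M : ℕ) (hk : k + 1 < m) (hm : m ≤ M) (hK : K ≤ k + 1) :
    Hyp (k+1) m K M = 1 := by
  have hMm := choose_pos_real hm
  have hnat : M.choose m = ∑ j ∈ range (k+2), K.choose j * (M - K).choose (m - j) := by
    have hV := Nat.add_choose_eq K (M - K) m
    rw [Finset.Nat.sum_antidiagonal_eq_sum_range_succ_mk] at hV
    have hKM : K + (M - K) = M := by omega
    rw [hKM] at hV
    rw [hV]
    refine (Finset.sum_subset (Finset.range_subset_range.2 (by omega)) ?_).symm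
    intro i hi hni
    rw [Finset.mem_range] at hi
    rw [Finset.mem_range, not_lt] at hni
    rw [Nat.choose_eq_zero_of_lt (by omega), zero_mul]
  unfold Hyp
  have hg : (∑ j ∈ range (k+1+1),
        if j ≤ m then ((K.choose j : ℝ) * (((M - K).choose (m - j)) : ℝ)) else 0)
      = ((∑ j ∈ range (k+2), K.choose j * (M - K).choose (m - j) : ℕ) : ℝ) := by
    push_cast
    refine Finset.sum_congr rfl fun j hj => ?_
    rw [Finset.mem_range] at hj
    rw [if_pos (by omega)]
  rw [hg, ← hnat, div_self (ne_of_gt hMm)]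

/-- For fixed `m`, `δ ∈ (0,1)`, `M` with `k + 1 < m ≤ M`, the hypergeometric tail
pseudo-inverse is strictly increasing in `k`: `HypInv(k,m,δ,M) < HypInv(k+1,m,δ,M)`. -/
theorem hypInv_strictMono_k (k m M : ℕ) (δ : ℝ) (hk : k + 1 < m) (hm : m ≤ M)
    (hδ₀ : 0 < δ) (hδ₁ : δ < 1) :
    HypInv k m δ M < HypInv (k + 1) m δ M := by
  have hMm := choose_pos_real hm
  have hMzero : Hyp (k+1) m M M = 0 := by
    unfold Hyp
    rw [Finset.sum_eq_zero, zero_div]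
    intro j hj
    rw [Finset.mem_range] at hj
    rw [if_pos (by omega)]
    have h0 : (M - M).choose (m - j) = 0 := by
      rw [Nat.sub_self]; exact Nat.choose_eq_zero_of_lt (by omega)
    rw [h0]
    simp
  have hMmem : M ∈ {K : ℕ | Hyp (k+1) m K M ≤ δ} := by
    simp only [Set.mem_setOf_eq, hMzero]; exact hδ₀.le
  have hne : {K : ℕ | Hyp (k+1) m K M ≤ δ}.Nonempty := ⟨M, hMmem⟩
  have hmem := Nat.sInf_mem hne
  have hKM : sInf {K : ℕ | Hyp (k+1) m K M ≤ δ} ≤ M := Nat.sInf_le hMmem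
  set K := sInf {K : ℕ | Hyp (k+1) m K M ≤ δ} with hKdef
  rw [Set.mem_setOf_eq] at hmem
  have hKbig : k + 2 ≤ K := by
    by_contra hcon
    push_neg at hcon
    rw [hyp_one k m K M hk hm (by omega)] at hmem
    linarith
  have hstep : Hyp k m (K-1) M ≤ δ := by
    have h1 : K - 1 + 1 = K := by omega
    have h2 := hyp_le k m (K-1) M hk hm (by omega)
    rw [h1] at h2
    exact h2.trans hmem
  have hfin : HypInv k m δ M ≤ K - 1 := Nat.sInf_le hstep
  have : HypInv (k+1) m δ M = K := rfl
  omega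
end

section
/- For integers K ≥ k+1 ≥ 1 and m, M in the valid range, the inequality Hyp(k+1,m,K,M) ≥ Hyp(k,m,K−1,M) holds, where Hyp is the hypergeometric tail function. -/
lemma key_sum_ineq (k m K' N : ℕ) (hk : k + 1 < m) :
    ∑ j ∈ Finset.range (k+1), K'.choose j * (N+1).choose (m-j)
      ≤ ∑ j ∈ Finset.range (k+2), (K'+1).choose j * N.choose (m-j) := by
  have hL : ∑ j ∈ Finset.range (k+1), K'.choose j * (N+1).choose (m-j)
      = ∑ j ∈ Finset.range (k+1), K'.choose j * N.choose (m-j-1)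
        + ∑ j ∈ Finset.range (k+1), K'.choose j * N.choose (m-j) := by
    rw [← Finset.sum_add_distrib]
    apply Finset.sum_congr rfl
    intro j hj
    simp only [Finset.mem_range] at hj
    obtain ⟨s, hs⟩ : ∃ s, m - j = s + 1 := ⟨m - j - 1, by omega⟩
    rw [hs]
    simp [Nat.choose_succ_succ, Nat.mul_add]
  have hR : ∑ j ∈ Finset.range (k+2), (K'+1).choose j * N.choose (m-j)
      = ∑ j ∈ Finset.range (k+1), K'.choose j * N.choose (m-j-1)
        + ∑ j ∈ Finset.range (k+2), K'.choose j * N.choose (m-j) := by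
    rw [Finset.sum_range_succ' (fun j => (K'+1).choose j * N.choose (m-j)) (k+1),
        Finset.sum_range_succ' (fun j => K'.choose j * N.choose (m-j)) (k+1)]
    simp only [Nat.choose_succ_succ, Nat.add_mul, Finset.sum_add_distrib, Nat.sub_sub]
    simp
    ring
  rw [hL, hR]
  exact Nat.add_le_add_left
    (Finset.sum_le_sum_of_subset (Finset.range_subset_range.mpr (by omega))) _

/-- For `K ≥ k + 1 ≥ 1` (and `k + 1 < m ≤ M`, `K ≤ M` in the valid range),
`Hyp(k+1,m,K,M) ≥ Hyp(k,m,K−1,M)`. -/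
theorem hyp_tail_shift_ineq (k m K M : ℕ) (hK : k + 1 ≤ K) (hk : k + 1 < m)
    (hm : m ≤ M) (hKM : K ≤ M) :
    Hyp k m (K - 1) M ≤ Hyp (k + 1) m K M := by
  obtain ⟨K', rfl⟩ : ∃ K', K = K' + 1 := ⟨K - 1, by omega⟩
  unfold Hyp
  have hpos : (0:ℝ) < (M.choose m : ℝ) := by exact_mod_cast Nat.choose_pos hm
  apply div_le_div_of_nonneg_right ?_ hpos.le
  have h1 : ∀ (s K₀ N₀ : ℕ), s ≤ m →
      (∑ j ∈ Finset.range (s + 1),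
        if j ≤ m then ((K₀.choose j : ℝ) * ((N₀ : ℕ).choose (m - j) : ℝ)) else 0)
      = ((∑ j ∈ Finset.range (s + 1), K₀.choose j * N₀.choose (m - j) : ℕ) : ℝ) := by
    intro s K₀ N₀ hs
    push_cast
    apply Finset.sum_congr rfl
    intro j hj
    simp only [Finset.mem_range] at hj
    rw [if_pos (by omega)]
  rw [show K' + 1 - 1 = K' from rfl]
  rw [h1 k K' (M - K') (by omega), h1 (k+1) (K'+1) (M - (K'+1)) (by omega)]
  have hN : M - K' = (M - (K'+1)) + 1 := by omega
  rw [hN]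
  exact_mod_cast key_sum_ineq k m K' (M - (K'+1)) hk
end

section
/- (Binomial tail inversion bound) Let h be a fixed classifier with true risk p = R_D(h) ∈ [0,1], and let S be an i.i.d. sample of m examples so that the number of errors k_S(h) = m·R_S(h) is a Binomial(m, p) random variable. Define BinInv(m,k,δ) = min{q ∈ (0,1) : Bin(m,k,q) ≤ δ} for k < m and BinInv(m,m,δ) = 1, where Bin(m,k,q) = ∑_{j=0}^{k} C(m,j)·q^j·(1−q)^{m−j}. Then for every δ ∈ (0,1), P[ p ≤ BinInv(m, k_S(h), δ) ] > 1 − δ. -/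
/-- The binomial tail `Bin(m,k,q) = ∑_{j=0}^{k} C(m,j)·q^j·(1−q)^{m−j}`. -/
noncomputable def Bin (m k : ℕ) (q : ℝ) : ℝ :=
  ∑ j ∈ Finset.range (k + 1), (m.choose j : ℝ) * q ^ j * (1 - q) ^ (m - j)

/-- The binomial tail inversion `BinInv(m,k,δ) = min{q ∈ (0,1) : Bin(m,k,q) ≤ δ}` for
`k < m`, and `BinInv(m,m,δ) = 1`. -/
noncomputable def BinInv (m k : ℕ) (δ : ℝ) : ℝ :=
  if k < m then sInf {q : ℝ | q ∈ Set.Ioo (0 : ℝ) 1 ∧ Bin m k q ≤ δ} else 1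

open Finset Set Filter Topology

lemma bin_term_hasDerivAt (m j : ℕ) (q : ℝ) :
    HasDerivAt (fun x : ℝ => (m.choose j : ℝ) * (x ^ j * (1 - x) ^ (m - j)))
      ((m.choose j : ℝ) * ((j : ℝ) * q ^ (j - 1) * (1 - q) ^ (m - j)
        - ((m - j : ℕ) : ℝ) * q ^ j * (1 - q) ^ (m - j - 1))) q := by
  have h1 : HasDerivAt (fun x : ℝ => x ^ j) ((j : ℝ) * q ^ (j - 1)) q := hasDerivAt_pow j q
  have hs : HasDerivAt (fun x : ℝ => 1 - x) (-1) q := by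
    exact (hasDerivAt_id' q).const_sub (1:ℝ)
  have h2 : HasDerivAt (fun x : ℝ => (1 - x) ^ (m - j))
      (-(((m - j : ℕ) : ℝ) * (1 - q) ^ (m - j - 1))) q := by
    have := (hasDerivAt_pow (m - j) (1 - q)).comp q hs
    exact this.congr_deriv (by ring)
  have := (h1.mul h2).const_mul ((m.choose j : ℝ))
  exact this.congr_deriv (by ring)

lemma bin_hasDerivAt (m k : ℕ) (hk : k < m) (q : ℝ) :
    HasDerivAt (Bin m k)
      (-((m : ℝ) * ((m - 1).choose k : ℝ) * q ^ k * (1 - q) ^ (m - 1 - k))) q := by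
  have hsum : HasDerivAt (Bin m k)
      (∑ j ∈ range (k+1), (m.choose j : ℝ) * ((j : ℝ) * q ^ (j - 1) * (1 - q) ^ (m - j)
        - ((m - j : ℕ) : ℝ) * q ^ j * (1 - q) ^ (m - j - 1))) q := by
    have : Bin m k = fun x : ℝ =>
        ∑ j ∈ range (k+1), (m.choose j : ℝ) * (x ^ j * (1 - x) ^ (m - j)) := by
      funext x; unfold Bin; exact Finset.sum_congr rfl fun j _ => by ring
    rw [this]
    exact HasDerivAt.fun_sum (fun j _ => bin_term_hasDerivAt m j q)
  convert hsum using 1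
  set F : ℕ → ℝ := fun i => (m : ℝ) * ((m-1).choose i : ℝ) * q ^ i * (1 - q) ^ (m - 1 - i)
    with hF
  set D : ℕ → ℝ := fun j => if j = 0 then 0 else F (j - 1) with hD
  have hterm : ∀ j ∈ range (k+1),
      (m.choose j : ℝ) * ((j:ℝ) * q^(j-1) * (1-q)^(m-j) - ((m-j:ℕ):ℝ) * q^j * (1-q)^(m-j-1))
        = D j - D (j+1) := by
    intro j hj
    have hjm : j < m := lt_of_le_of_lt (Nat.lt_succ_iff.mp (mem_range.mp hj)) hk
    match j with
    | 0 =>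
      simp only [hD, hF]
      norm_num
    | (r+1) =>
      have hm1 : m - 1 + 1 = m := by omega
      have e1 : m * (m-1).choose r = m.choose (r+1) * (r+1) := by
        have h := Nat.add_one_mul_choose_eq (m-1) r
        simpa [Nat.succ_eq_add_one, hm1] using h
      have e2 : m * (m-1).choose (r+1) = m.choose (r+1) * (m - (r+1)) := by
        have h := Nat.add_one_mul_choose_eq (m-1) (r+1)
        have h' : m * (m-1).choose (r+1) = m.choose (r+2) * (r+2) := by
          simpa [Nat.succ_eq_add_one, hm1] using h
        rw [h']
        exact Nat.choose_succ_right_eq m (r+1)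
      have e1' : (m:ℝ) * ((m-1).choose r : ℝ) = (m.choose (r+1) : ℝ) * ((r:ℝ)+1) := by
        exact_mod_cast e1
      have e2' : (m:ℝ) * ((m-1).choose (r+1) : ℝ)
          = (m.choose (r+1) : ℝ) * ((m - 1 - r : ℕ) : ℝ) := by
        rw [show m - 1 - r = m - (r+1) from by omega]
        exact_mod_cast e2
      simp only [hD, hF, if_neg (Nat.succ_ne_zero r), Nat.add_sub_cancel]
      rw [show m - (r+1) - 1 = m - 1 - (r+1) from by omega,
          show m - (r+1) = m - 1 - r from by omega]
      push_cast
      linear_combination (-(q ^ r * (1-q) ^ (m-1-r))) * e1'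
        + (q ^ (r+1) * (1-q) ^ (m-1-(r+1))) * e2'
  rw [Finset.sum_congr rfl hterm, Finset.sum_range_sub' D (k+1)]
  simp [hD, hF]

lemma bin_continuous (m k : ℕ) : Continuous (Bin m k) := by
  unfold Bin
  exact continuous_finset_sum _ fun j _ => by fun_prop

lemma bin_strictAntiOn (m k : ℕ) (hk : k < m) : StrictAntiOn (Bin m k) (Set.Icc 0 1) := by
  apply strictAntiOn_of_deriv_neg (convex_Icc 0 1) (bin_continuous m k).continuousOn
  intro q hq
  rw [interior_Icc] at hq
  rw [(bin_hasDerivAt m k hk q).deriv]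
  have h1 : (0:ℝ) < q := hq.1
  have h2 : (0:ℝ) < 1 - q := by linarith [hq.2]
  have hch : 0 < ((m-1).choose k : ℝ) := by
    exact_mod_cast Nat.choose_pos (by omega : k ≤ m - 1)
  have hm : (0:ℝ) < m := by exact_mod_cast (by omega : 0 < m)
  have : 0 < (m : ℝ) * ((m - 1).choose k : ℝ) * q ^ k * (1 - q) ^ (m - 1 - k) :=
    mul_pos (mul_pos (mul_pos hm hch) (pow_pos h1 k)) (pow_pos h2 _)
  linarith

lemma bin_one (m k : ℕ) (hk : k < m) : Bin m k 1 = 0 := by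
  unfold Bin
  apply Finset.sum_eq_zero
  intro j hj
  have : m - j ≠ 0 := by
    have := Nat.lt_succ_iff.mp (Finset.mem_range.mp hj); omega
  simp [this]

lemma binInv_set_nonempty (m k : ℕ) (hk : k < m) {δ : ℝ} (hδ : 0 < δ) :
    {q : ℝ | q ∈ Set.Ioo (0 : ℝ) 1 ∧ Bin m k q ≤ δ}.Nonempty := by
  have hc : ContinuousAt (Bin m k) 1 := (bin_continuous m k).continuousAt
  have hev : ∀ᶠ q in 𝓝 (1:ℝ), Bin m k q < δ := by
    have := hc.eventually_lt_const (by rw [bin_one m k hk]; exact hδ)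
    exact this
  have hev' : ∀ᶠ q in 𝓝[<] (1:ℝ), Bin m k q < δ := hev.filter_mono nhdsWithin_le_nhds
  have hmem : Set.Ioo (0:ℝ) 1 ∈ 𝓝[<] (1:ℝ) :=
    Ioo_mem_nhdsLT_of_mem (by constructor <;> norm_num)
  obtain ⟨q, hq1, hq2⟩ := (hev'.and (eventually_of_mem hmem fun x hx => hx)).exists
  exact ⟨q, hq2, hq1.le⟩

lemma binInv_set_bddBelow (m k : ℕ) (δ : ℝ) :
    BddBelow {q : ℝ | q ∈ Set.Ioo (0 : ℝ) 1 ∧ Bin m k q ≤ δ} :=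
  ⟨0, fun x hx => hx.1.1.le⟩

lemma binInv_le_one (m k : ℕ) {δ : ℝ} (hδ : 0 < δ) : BinInv m k δ ≤ 1 := by
  unfold BinInv
  split_ifs with h
  · obtain ⟨q, hq⟩ := binInv_set_nonempty m k h hδ
    exact le_trans (csInf_le (binInv_set_bddBelow m k δ) hq) hq.1.2.le
  · exact le_refl 1

lemma binInv_mono (m : ℕ) {δ : ℝ} (hδ : 0 < δ) {i j : ℕ} (hij : i ≤ j) :
    BinInv m i δ ≤ BinInv m j δ := by
  by_cases hj : j < m
  · have hi : i < m := lt_of_le_of_lt hij hj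
    unfold BinInv
    rw [if_pos hi, if_pos hj]
    apply csInf_le_csInf (binInv_set_bddBelow m i δ) (binInv_set_nonempty m j hj hδ)
    intro q hq
    refine ⟨hq.1, le_trans ?_ hq.2⟩
    unfold Bin
    apply Finset.sum_le_sum_of_subset_of_nonneg
    · exact Finset.range_subset_range.mpr (by omega)
    · intro x _ _
      have h1 : (0:ℝ) ≤ q := hq.1.1.le
      have h2 : (0:ℝ) ≤ 1 - q := by linarith [hq.1.2]
      positivity
  · calc BinInv m i δ ≤ 1 := binInv_le_one m i hδ
      _ = BinInv m j δ := by unfold BinInv; rw [if_neg hj]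

lemma bin_lt_of_binInv_lt (m k : ℕ) {p δ : ℝ} (hp : p ∈ Set.Icc (0 : ℝ) 1)
    (hδ : δ ∈ Set.Ioo (0 : ℝ) 1) (h : BinInv m k δ < p) : Bin m k p < δ := by
  have hk : k < m := by
    by_contra hk
    have : BinInv m k δ = 1 := by unfold BinInv; rw [if_neg hk]
    rw [this] at h
    linarith [hp.2]
  have hne := binInv_set_nonempty m k hk hδ.1
  have hlt : sInf {q : ℝ | q ∈ Set.Ioo (0 : ℝ) 1 ∧ Bin m k q ≤ δ} < p := by
    unfold BinInv at h
    rwa [if_pos hk] at h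
  obtain ⟨q, hq, hqp⟩ := exists_lt_of_csInf_lt hne hlt
  calc Bin m k p < Bin m k q := by
        apply bin_strictAntiOn m k hk ⟨hq.1.1.le, hq.1.2.le⟩ ⟨hp.1, hp.2⟩ hqp
      _ ≤ δ := hq.2

/-- Langford's binomial tail inversion bound: if the number of errors `X` of a fixed
classifier with true risk `p` on an i.i.d. sample of size `m` is `Binomial(m,p)`, then
`P[ p ≤ BinInv(m, X, δ) ] > 1 − δ`. The probability is written by decomposing over the
possible values `X = j`, each occurring with probability `C(m,j)·p^j·(1−p)^{m−j}`. -/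
theorem binomial_tail_inversion_bound (m : ℕ) (p δ : ℝ)
    (hp : p ∈ Set.Icc (0 : ℝ) 1) (hδ : δ ∈ Set.Ioo (0 : ℝ) 1) :
    (1 : ℝ) - δ
      < ∑ j ∈ Finset.range (m + 1),
          (m.choose j : ℝ) * p ^ j * (1 - p) ^ (m - j)
            * (if p ≤ BinInv m j δ then 1 else 0) := by
  classical
  set term : ℕ → ℝ := fun j => (m.choose j : ℝ) * p ^ j * (1 - p) ^ (m - j) with hterm
  have hfull : ∑ j ∈ Finset.range (m + 1), term j = 1 := by
    calc ∑ j ∈ Finset.range (m + 1), term j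
        = ∑ j ∈ Finset.range (m + 1), p ^ j * (1 - p) ^ (m - j) * (m.choose j : ℝ) :=
          Finset.sum_congr rfl fun j _ => by rw [hterm]; ring
      _ = (p + (1 - p)) ^ m := (add_pow p (1 - p) m).symm
      _ = 1 := by norm_num
  set T : Finset ℕ := (Finset.range (m + 1)).filter (fun j => BinInv m j δ < p) with hT
  have hsplit : ∑ j ∈ Finset.range (m + 1), term j * (if p ≤ BinInv m j δ then 1 else 0)
      = (∑ j ∈ Finset.range (m + 1), term j) - ∑ j ∈ T, term j := by
    rw [hT, Finset.sum_filter, ← Finset.sum_sub_distrib]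
    apply Finset.sum_congr rfl
    intro j _
    by_cases h : p ≤ BinInv m j δ
    · rw [if_pos h, if_neg (not_lt.mpr h)]; ring
    · rw [if_neg h, if_pos (not_le.mp h)]; ring
  rw [hfull] at hsplit
  have hTsum : ∑ j ∈ T, term j < δ := by
    rcases T.eq_empty_or_nonempty with he | hne
    · rw [he]; simpa using hδ.1
    · set κ := T.max' hne with hκ
      have hκT : κ ∈ T := T.max'_mem hne
      have hκm : κ ≤ m := Nat.lt_succ_iff.mp (Finset.mem_range.mp (Finset.mem_filter.mp hκT).1)
      have hκlt : BinInv m κ δ < p := (Finset.mem_filter.mp hκT).2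
      have hTeq : T = Finset.range (κ + 1) := by
        ext j
        simp only [hT, Finset.mem_filter, Finset.mem_range]
        constructor
        · intro ⟨h1, h2⟩
          exact Nat.lt_succ_iff.mpr (T.le_max' j (Finset.mem_filter.mpr ⟨Finset.mem_range.mpr h1, h2⟩))
        · intro hj
          have hj' : j ≤ κ := Nat.lt_succ_iff.mp hj
          exact ⟨by omega, lt_of_le_of_lt (binInv_mono m hδ.1 hj') hκlt⟩
      rw [hTeq]
      have : ∑ j ∈ Finset.range (κ + 1), term j = Bin m κ p := rfl
      rw [this]
      exact bin_lt_of_binInv_lt m κ hp hδ hκlt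
  calc (1:ℝ) - δ < 1 - ∑ j ∈ T, term j := by linarith
    _ = _ := hsplit.symm
end
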